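/- Any instance of the optimal classification tree problem reduces to an instance of the Optimal Tree Policy problem with horizon H = 1: given data points x_1,...,x_m with labels, classification weights ω_{i,ℓ}, and a class of admissible trees, define a one-period MDP with states {x_1,...,x_m}, actions equal to the set of labels, uniform initial distribution, and costs c_{x_i, ℓ} = ω_{i,ℓ}; then for every admissible tree T and tree policy π ∈ Π_T, m · C(π) equals the weighted classification error of T with class-distributions given by π, so minimizing policy cost is equivalent to minimizing classification error. -/
import Mathlib


/-- Any optimal classification tree instance reduces to an Optimal Tree
Policy instance with horizon `H = 1`: taking states to be the data points, actions to be
the labels, a uniform initial distribution, and costs equal to the classification weights,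
`m · C(π)` equals the weighted classification error of the tree with class-distributions
given by the policy. -/
theorem classification_tree_reduces_to_otp
    {L : Type} [Fintype L] (m K : ℕ) (hm : 0 < m)
    (ω : Fin m → L → ℝ) (hω : ∀ i ℓ, 0 ≤ ω i ℓ)
    (T : Fin m → Fin K) (μ : Fin K → L → ℝ)
    (hμ0 : ∀ k ℓ, 0 ≤ μ k ℓ) (hμ1 : ∀ k, ∑ ℓ, μ k ℓ = 1) :
    (m : ℝ) * (∑ i, (1 / (m : ℝ)) * ∑ ℓ, μ (T i) ℓ * ω i ℓ)
      = ∑ k : Fin K, ∑ i, ∑ ℓ,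
          ω i ℓ * (if T i = k then (1 : ℝ) else 0) * μ k ℓ := by
  have hm' : (m:ℝ) ≠ 0 := Nat.cast_ne_zero.mpr hm.ne'
  rw [Finset.mul_sum]
  rw [Finset.sum_comm]
  apply Finset.sum_congr rfl
  intro i _
  rw [show ∀ x : ℝ, (m:ℝ) * (1/(m:ℝ) * x) = x by intro x; field_simp]
  rw [Finset.sum_comm]
  apply Finset.sum_congr rfl
  intro ℓ _
  rw [Finset.sum_eq_single (T i)]
  · simp [mul_comm]
  · intro k _ hk; simp [Ne.symm hk]
  · simp
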